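/- Let (𝔒, ∼, ⊙) be a merging system, ρ an equivalence relation on 𝔒 compatible with ∼ and ⊙ such that every ρ-equivalence class is finite, and 𝕆 ⊆ 𝔒 a subset. Then the merging closure 𝕆̂ of 𝕆 in (𝔒, ∼, ⊙) is finite if and only if the merging closure of π_ρ(𝕆) in the quotient merging system (𝔒/ρ, ∼_ρ, ⊙_ρ) is finite. -/

import Mathlib

/-- A merging system `(𝔒, ∼, ⊙)`: a type together with an alignment relation `sim`
and a partial binary merging operation `merge` defined exactly on aligned pairs. -/
structure MergingSystem (α : Type*) where
  sim : α → α → Prop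
  merge : (a : α) → (b : α) → sim a b → α

namespace MergingSystem

variable {α β : Type*}

/-- `h` is a homomorphism of merging systems from `M` to `N`: whenever `a ∼ b`,
`h a ≈ h b` and `h (a ⊙ b) = h a ⫰ h b`. -/
def IsHom (M : MergingSystem α) (N : MergingSystem β) (h : α → β) : Prop :=
  ∀ a b, ∀ hab : M.sim a b, ∃ hab' : N.sim (h a) (h b),
    h (M.merge a b hab) = N.merge (h a) (h b) hab'

/-- An equivalence relation `ρ` is compatible with the alignment relation and the
merging operation of `M`. -/
def Compatible (M : MergingSystem α) (ρ : α → α → Prop) : Prop :=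
  ∀ a a' b b', ρ a a' → ρ b b' →
    (M.sim a b ↔ M.sim a' b') ∧
      ∀ (hab : M.sim a b) (hab' : M.sim a' b'),
        ρ (M.merge a b hab) (M.merge a' b' hab')

/-- `Mq` is the quotient merging system of `M` by the setoid `s`:
`[a] ∼ [b] ↔ a ∼ b` and `[a] ⊙ [b] = [a ⊙ b]`. -/
def IsQuotientOf (M : MergingSystem α) (s : Setoid α)
    (Mq : MergingSystem (Quotient s)) : Prop :=
  (∀ a b, Mq.sim (Quotient.mk s a) (Quotient.mk s b) ↔ M.sim a b) ∧
    ∀ a b, ∀ hab : M.sim a b, ∀ hab' : Mq.sim (Quotient.mk s a) (Quotient.mk s b),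
      Mq.merge (Quotient.mk s a) (Quotient.mk s b) hab' = Quotient.mk s (M.merge a b hab)

/-- Condition (I): every ontology is aligned with itself and `a ⊙ a = a`. -/
def CondI (M : MergingSystem α) : Prop :=
  ∀ a, ∃ haa : M.sim a a, M.merge a a haa = a

/-- Condition (CA): whenever `a ⊙ b` and `b ⊙ c` are defined, both
`(a ⊙ b) ⊙ c` and `a ⊙ (b ⊙ c)` are defined and equal. -/
def CondCA (M : MergingSystem α) : Prop :=
  ∀ a b c, ∀ hab : M.sim a b, ∀ hbc : M.sim b c,
    ∃ (h₁ : M.sim (M.merge a b hab) c) (h₂ : M.sim a (M.merge b c hbc)),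
      M.merge (M.merge a b hab) c h₁ = M.merge a (M.merge b c hbc) h₂

/-- The natural relation `a ≤_⊙ b`: `a ∼ b`, `b ∼ a`, and `a ⊙ b = b = b ⊙ a`. -/
def natLE (M : MergingSystem α) (a b : α) : Prop :=
  ∃ (h₁ : M.sim a b) (h₂ : M.sim b a),
    M.merge a b h₁ = b ∧ M.merge b a h₂ = b

/-- A subset `P` is merging-closed: for all `a, b ∈ P` with `a ∼ b`, `a ⊙ b ∈ P`. -/
def MergingClosed (M : MergingSystem α) (P : Set α) : Prop :=
  ∀ a ∈ P, ∀ b ∈ P, ∀ hab : M.sim a b, M.merge a b hab ∈ P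

/-- `C` is the merging closure of `O` in `M`: the smallest merging-closed
subset containing `O`. -/
def IsMergingClosureOf (M : MergingSystem α) (O C : Set α) : Prop :=
  O ⊆ C ∧ M.MergingClosed C ∧ ∀ P, O ⊆ P → M.MergingClosed P → C ⊆ P

end MergingSystem

/-- For a merging system with a compatible equivalence relation `ρ` all of
whose equivalence classes are finite, the merging closure of `𝕆` is finite if and only if
the merging closure of `π_ρ(𝕆)` in the quotient merging system is finite. -/
theorem merging_closure_finite_iff_quotient_closure_finite
    {α : Type*} (M : MergingSystem α) (s : Setoid α)
    (hcompat : M.Compatible s.r)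
    (hfin : ∀ a : α, {b : α | s.r a b}.Finite)
    (Mq : MergingSystem (Quotient s)) (hMq : M.IsQuotientOf s Mq)
    (O C : Set α) (hC : M.IsMergingClosureOf O C)
    (Cq : Set (Quotient s))
    (hCq : Mq.IsMergingClosureOf (Quotient.mk s '' O) Cq) :
    C.Finite ↔ Cq.Finite := by
  -- Cq ⊆ π '' C
  have hsub1 : Cq ⊆ Quotient.mk s '' C := by
    apply hCq.2.2
    · exact Set.image_mono hC.1
    · rintro _ ⟨a, ha, rfl⟩ _ ⟨b, hb, rfl⟩ hab
      have hab' : M.sim a b := (hMq.1 a b).mp hab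
      refine ⟨M.merge a b hab', hC.2.1 a ha b hb hab', ?_⟩
      exact (hMq.2 a b hab' hab).symm
  -- C ⊆ π ⁻¹' Cq
  have hsub2 : C ⊆ Quotient.mk s ⁻¹' Cq := by
    apply hC.2.2
    · intro a ha
      exact hCq.1 ⟨a, ha, rfl⟩
    · intro a ha b hb hab
      have habq : Mq.sim (Quotient.mk s a) (Quotient.mk s b) := (hMq.1 a b).mpr hab
      have := hCq.2.1 _ ha _ hb habq
      rwa [hMq.2 a b hab habq] at this
  constructor
  · intro hCf
    exact (hCf.image _).subset hsub1
  · intro hCqf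
    have hpre : (Quotient.mk s ⁻¹' Cq).Finite := by
      have heq : Quotient.mk s ⁻¹' Cq = ⋃ q ∈ Cq, Quotient.mk s ⁻¹' {q} := by
        ext a; simp
      rw [heq]
      apply hCqf.biUnion
      intro q _
      induction q using Quotient.ind with
      | _ a =>
        apply (hfin a).subset
        intro b hb
        have : s.r b a := Quotient.eq.mp hb
        exact s.symm this
    exact hpre.subset hsub2
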